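/- Let m ≥ 6 and let T be a triangulation of a convex m-gon. Let e be the number of vertices i with deg_T(i) = 0 (the ears of T) and let l be the number of vertices i with deg_T(i) = 1. Then 6·e + 2·l ≤ 3·m (equivalently, 3e + l ≤ 3m/2). -/

import Mathlib

/-- We label the vertices of a convex `m`-gon by `Fin m` in cyclic order, and
represent a diagonal by the ordered pair of its endpoints, smaller label first.
`p` is a diagonal if its endpoints are distinct and non-adjacent in the cyclic
order. -/
def IsDiagonal (m : ℕ) (p : Fin m × Fin m) : Prop :=
  (p.1 : ℕ) + 1 < (p.2 : ℕ) ∧ ¬((p.1 : ℕ) = 0 ∧ (p.2 : ℕ) + 1 = m)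

/-- Two diagonals (each given with its smaller endpoint first) cross iff exactly
one endpoint of each lies strictly between the two endpoints of the other in the
cyclic order; for pairs ordered as above this is expressed by the following two
"exactly one" (Xor) conditions, which amount to the four endpoints being
distinct and alternating around the polygon. -/
def Crosses (m : ℕ) (p q : Fin m × Fin m) : Prop :=
  Xor' (p.1 < q.1 ∧ q.1 < p.2) (p.1 < q.2 ∧ q.2 < p.2) ∧
  Xor' (q.1 < p.1 ∧ p.1 < q.2) (q.1 < p.2 ∧ p.2 < q.2)

/-- `T` is a triangulation of the convex `m`-gon: a maximal set of pairwise
non-crossing diagonals. -/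
def IsTriangulation (m : ℕ) (T : Finset (Fin m × Fin m)) : Prop :=
  (∀ p ∈ T, IsDiagonal m p) ∧
  (∀ p ∈ T, ∀ q ∈ T, ¬ Crosses m p q) ∧
  (∀ q : Fin m × Fin m, IsDiagonal m q → q ∉ T → ∃ p ∈ T, Crosses m p q)

/-- The degree of vertex `i` in `T`: the number of diagonals of `T` containing `i`. -/
def degT {m : ℕ} (T : Finset (Fin m × Fin m)) (i : Fin m) : ℕ :=
  (T.filter (fun p => p.1 = i ∨ p.2 = i)).card

namespace EarsAux

lemma mod_char (m y j : ℕ) (hm : 0 < m) (hy : y < m) (hj : j ≤ m) :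
    ((y + j) % m = y + j ∧ y + j < m) ∨ ((y + j) % m + m = y + j ∧ m ≤ y + j) := by
  rcases Nat.lt_or_ge (y + j) m with h | h
  · exact Or.inl ⟨Nat.mod_eq_of_lt h, h⟩
  · right
    refine ⟨?_, h⟩
    have h2 : y + j - m < m := by omega
    have heq : (y + j) % m = (y + j - m) % m := by
      conv_lhs => rw [show y + j = (y + j - m) + m by omega]
      exact Nat.add_mod_right _ m
    rw [heq, Nat.mod_eq_of_lt h2]
    omega

lemma deg0_iff {m : ℕ} (T : Finset (Fin m × Fin m)) (i : Fin m) :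
    degT T i = 0 ↔ ∀ p ∈ T, ¬(p.1 = i ∨ p.2 = i) := by
  rw [degT, Finset.card_eq_zero, Finset.filter_eq_empty_iff]

lemma deg1_unique {m : ℕ} {T : Finset (Fin m × Fin m)} {j : Fin m}
    (h : degT T j = 1) {r : Fin m × Fin m} (hrT : r ∈ T)
    (hre : r.1 = j ∨ r.2 = j) : ∀ p ∈ T, (p.1 = j ∨ p.2 = j) → p = r := by
  rw [degT, Finset.card_eq_one] at h
  obtain ⟨u, hu⟩ := h
  have hr : r ∈ T.filter (fun p => p.1 = j ∨ p.2 = j) :=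
    Finset.mem_filter.mpr ⟨hrT, hre⟩
  intro p hp hpe
  have hp' : p ∈ T.filter (fun p => p.1 = j ∨ p.2 = j) :=
    Finset.mem_filter.mpr ⟨hp, hpe⟩
  rw [hu, Finset.mem_singleton] at hr hp'
  rw [hr, hp']

lemma two_le_deg {m : ℕ} {T : Finset (Fin m × Fin m)} {j : Fin m}
    {r s : Fin m × Fin m} (hr : r ∈ T) (hs : s ∈ T) (hrs : r ≠ s)
    (hre : r.1 = j ∨ r.2 = j) (hse : s.1 = j ∨ s.2 = j) : 2 ≤ degT T j := by
  have hsub : ({r, s} : Finset (Fin m × Fin m)) ⊆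
      T.filter (fun p => p.1 = j ∨ p.2 = j) := by
    intro p hp
    simp only [Finset.mem_insert, Finset.mem_singleton] at hp
    rcases hp with rfl | rfl
    · exact Finset.mem_filter.mpr ⟨hr, hre⟩
    · exact Finset.mem_filter.mpr ⟨hs, hse⟩
  calc 2 = ({r, s} : Finset (Fin m × Fin m)).card := (Finset.card_pair hrs).symm
    _ ≤ _ := Finset.card_le_card hsub

lemma ear_diag {m : ℕ} (hm : 6 ≤ m) {T : Finset (Fin m × Fin m)}
    (hT : IsTriangulation m T) {i : Fin m} (hi : degT T i = 0) :
    ∃ r ∈ T, (r.1.val = (i.val + (m - 1)) % m ∧ r.2.val = (i.val + 1) % m) ∨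
             (r.1.val = (i.val + 1) % m ∧ r.2.val = (i.val + (m - 1)) % m) := by
  by_contra hcon
  push_neg at hcon
  have hx : i.val < m := i.isLt
  have cP := mod_char m i.val (m - 1) (by omega) hx (by omega)
  have cS := mod_char m i.val 1 (by omega) hx (by omega)
  have hdeg := (deg0_iff T i).mp hi
  by_cases hx0 : i.val = 0
  · set q : Fin m × Fin m := (⟨1, by omega⟩, ⟨m - 1, by omega⟩) with hqdef
    have hq1 : q.1.val = 1 := rfl
    have hq2 : q.2.val = m - 1 := rfl
    have hqd : IsDiagonal m q := by
      constructor
      · omega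
      · omega
    have hqT : q ∉ T := by
      intro hqT
      exact (hcon q hqT).2 (by omega) (by omega)
    obtain ⟨p, hpT, hc⟩ := hT.2.2 q hqd hqT
    have hpd := hT.1 p hpT
    obtain ⟨hpd1, hpd2⟩ := hpd
    have hne := hdeg p hpT
    have hne1 : p.1.val ≠ i.val := fun h => hne (Or.inl (Fin.ext h))
    have hne2 : p.2.val ≠ i.val := fun h => hne (Or.inr (Fin.ext h))
    have hb1 : p.1.val < m := p.1.isLt
    have hb2 : p.2.val < m := p.2.isLt
    simp only [Crosses, Xor', xor_def, Fin.lt_def, hq1, hq2] at hc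
    omega
  · by_cases hxm : i.val = m - 1
    · set q : Fin m × Fin m := (⟨0, by omega⟩, ⟨m - 2, by omega⟩) with hqdef
      have hq1 : q.1.val = 0 := rfl
      have hq2 : q.2.val = m - 2 := rfl
      have hqd : IsDiagonal m q := ⟨by omega, by omega⟩
      have hqT : q ∉ T := by
        intro hqT
        exact (hcon q hqT).2 (by omega) (by omega)
      obtain ⟨p, hpT, hc⟩ := hT.2.2 q hqd hqT
      obtain ⟨hpd1, hpd2⟩ := hT.1 p hpT
      have hne := hdeg p hpT
      have hne1 : p.1.val ≠ i.val := fun h => hne (Or.inl (Fin.ext h))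
      have hne2 : p.2.val ≠ i.val := fun h => hne (Or.inr (Fin.ext h))
      have hb1 : p.1.val < m := p.1.isLt
      have hb2 : p.2.val < m := p.2.isLt
      simp only [Crosses, Xor', xor_def, Fin.lt_def, hq1, hq2] at hc
      omega
    · set q : Fin m × Fin m := (⟨i.val - 1, by omega⟩, ⟨i.val + 1, by omega⟩) with hqdef
      have hq1 : q.1.val = i.val - 1 := rfl
      have hq2 : q.2.val = i.val + 1 := rfl
      have hqd : IsDiagonal m q := ⟨by omega, by omega⟩
      have hqT : q ∉ T := by
        intro hqT
        exact (hcon q hqT).1 (by omega) (by omega)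
      obtain ⟨p, hpT, hc⟩ := hT.2.2 q hqd hqT
      obtain ⟨hpd1, hpd2⟩ := hT.1 p hpT
      have hne := hdeg p hpT
      have hne1 : p.1.val ≠ i.val := fun h => hne (Or.inl (Fin.ext h))
      have hne2 : p.2.val ≠ i.val := fun h => hne (Or.inr (Fin.ext h))
      have hb1 : p.1.val < m := p.1.isLt
      have hb2 : p.2.val < m := p.2.isLt
      simp only [Crosses, Xor', xor_def, Fin.lt_def, hq1, hq2] at hc
      omega

lemma no_adjacent_ears {m : ℕ} (hm : 6 ≤ m) {T : Finset (Fin m × Fin m)}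
    (hT : IsTriangulation m T) {i j : Fin m} (hij : j.val = (i.val + 1) % m)
    (hi : degT T i = 0) (hj : degT T j = 0) : False := by
  obtain ⟨r, hrT, hr⟩ := ear_diag hm hT hi
  obtain ⟨s, hsT, hs⟩ := ear_diag hm hT hj
  have hnc := hT.2.1 r hrT s hsT
  obtain ⟨hrd1, hrd2⟩ := hT.1 r hrT
  obtain ⟨hsd1, hsd2⟩ := hT.1 s hsT
  have hxi : i.val < m := i.isLt
  have hxj : j.val < m := j.isLt
  have cPi := mod_char m i.val (m - 1) (by omega) hxi (by omega)
  have cSi := mod_char m i.val 1 (by omega) hxi (by omega)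
  have cPj := mod_char m j.val (m - 1) (by omega) hxj (by omega)
  have cSj := mod_char m j.val 1 (by omega) hxj (by omega)
  apply hnc
  simp only [Crosses, Xor', xor_def, Fin.lt_def]
  rcases cPi with ⟨e1, e1'⟩ | ⟨e1, e1'⟩ <;> rcases cSi with ⟨e2, e2'⟩ | ⟨e2, e2'⟩ <;>
    rcases cPj with ⟨e3, e3'⟩ | ⟨e3, e3'⟩ <;> rcases cSj with ⟨e4, e4'⟩ | ⟨e4, e4'⟩ <;>
    rcases hr with ⟨f1, f2⟩ | ⟨f1, f2⟩ <;> rcases hs with ⟨g1, g2⟩ | ⟨g1, g2⟩ <;>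
    omega

lemma ear_gap1 {m : ℕ} (hm : 6 ≤ m) {T : Finset (Fin m × Fin m)}
    (hT : IsTriangulation m T) {i k jv : Fin m}
    (hkv : k.val = (i.val + 2) % m) (hjv : jv.val = (i.val + 1) % m)
    (hi : degT T i = 0) (hk : degT T k = 0) : 2 ≤ degT T jv := by
  obtain ⟨r, hrT, hr⟩ := ear_diag hm hT hi
  obtain ⟨s, hsT, hs⟩ := ear_diag hm hT hk
  obtain ⟨hrd1, hrd2⟩ := hT.1 r hrT
  obtain ⟨hsd1, hsd2⟩ := hT.1 s hsT
  have hxi : i.val < m := i.isLt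
  have hxk : k.val < m := k.isLt
  have cPi := mod_char m i.val (m - 1) (by omega) hxi (by omega)
  have cSi := mod_char m i.val 1 (by omega) hxi (by omega)
  have c2 := mod_char m i.val 2 (by omega) hxi (by omega)
  have cPk := mod_char m k.val (m - 1) (by omega) hxk (by omega)
  have cSk := mod_char m k.val 1 (by omega) hxk (by omega)
  have hre : r.1 = jv ∨ r.2 = jv := by
    rcases hr with ⟨h1, h2⟩ | ⟨h1, h2⟩
    · exact Or.inr (Fin.ext (by omega))
    · exact Or.inl (Fin.ext (by omega))
  have hse : s.1 = jv ∨ s.2 = jv := by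
    rcases hs with ⟨h1, h2⟩ | ⟨h1, h2⟩
    · exact Or.inl (Fin.ext (by omega))
    · exact Or.inr (Fin.ext (by omega))
  have hrs : r ≠ s := by
    intro h
    have e1 : r.1.val = s.1.val := by rw [h]
    have e2 : r.2.val = s.2.val := by rw [h]
    omega
  exact two_le_deg hrT hsT hrs hre hse

set_option maxHeartbeats 1000000 in
lemma ear_gap2 {m : ℕ} (hm : 6 ≤ m) {T : Finset (Fin m × Fin m)}
    (hT : IsTriangulation m T) {i k j1 j2 : Fin m}
    (hkv : k.val = (i.val + 3) % m) (h1v : j1.val = (i.val + 1) % m)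
    (h2v : j2.val = (i.val + 2) % m) (hi : degT T i = 0) (hkE : degT T k = 0)
    (hd1 : degT T j1 = 1) (hd2 : degT T j2 = 1) : False := by
  obtain ⟨r1, hr1T, hr1⟩ := ear_diag hm hT hi
  obtain ⟨r2, hr2T, hr2⟩ := ear_diag hm hT hkE
  obtain ⟨hr1d1, hr1d2⟩ := hT.1 r1 hr1T
  obtain ⟨hr2d1, hr2d2⟩ := hT.1 r2 hr2T
  have hxi : i.val < m := i.isLt
  have hA : (k.val + (m - 1)) % m = (i.val + 2) % m := by
    rw [hkv, Nat.mod_add_mod, show i.val + 3 + (m - 1) = (i.val + 2) + m by omega,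
      Nat.add_mod_right]
  have hB : (k.val + 1) % m = (i.val + 4) % m := by
    rw [hkv, Nat.mod_add_mod]
  have hr2' : (r2.1.val = (i.val + 2) % m ∧ r2.2.val = (i.val + 4) % m) ∨
      (r2.1.val = (i.val + 4) % m ∧ r2.2.val = (i.val + 2) % m) := by
    rw [hA, hB] at hr2
    exact hr2
  clear hr2
  have hr1e : r1.1 = j1 ∨ r1.2 = j1 := by
    rcases hr1 with ⟨h1, h2⟩ | ⟨h1, h2⟩
    · exact Or.inr (Fin.ext (h2.trans h1v.symm))
    · exact Or.inl (Fin.ext (h1.trans h1v.symm))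
  have hr2e : r2.1 = j2 ∨ r2.2 = j2 := by
    rcases hr2' with ⟨h1, h2⟩ | ⟨h1, h2⟩
    · exact Or.inl (Fin.ext (h1.trans h2v.symm))
    · exact Or.inr (Fin.ext (h2.trans h2v.symm))
  have hu1 := deg1_unique hd1 hr1T hr1e
  have hu2 := deg1_unique hd2 hr2T hr2e
  have hdeg := (deg0_iff T i).mp hi
  by_cases hx0 : i.val = 0
  · have c1 := mod_char m i.val 1 (by omega) hxi (by omega)
    have hj1v : j1.val = 1 := by omega
    clear c1
    have c2 := mod_char m i.val 2 (by omega) hxi (by omega)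
    have hj2v : j2.val = 2 := by omega
    have cP := mod_char m i.val (m - 1) (by omega) hxi (by omega)
    have hr1a : r1.1.val = 1 ∧ r1.2.val = m - 1 := by
      rcases hr1 with ⟨f1, f2⟩ | ⟨f1, f2⟩ <;>
        exact ⟨by omega, by omega⟩
    clear cP
    have c4 := mod_char m i.val 4 (by omega) hxi (by omega)
    have hqne : ¬(r2.1.val = 2 ∧ r2.2.val = m - 1) := by
      rcases hr2' with ⟨f1, f2⟩ | ⟨f1, f2⟩ <;> omega
    clear c2 c4 hr1 hr2' hr1e hr2e hkv h1v h2v hd1 hd2 hkE hi hA hB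
    set q : Fin m × Fin m := (⟨2, by omega⟩, ⟨m - 1, by omega⟩) with hqdef
    have hq1 : q.1.val = 2 := rfl
    have hq2 : q.2.val = m - 1 := rfl
    have hqd : IsDiagonal m q := ⟨by omega, by omega⟩
    have hqT : q ∉ T := by
      intro hqT
      have hqe : q.1 = j2 ∨ q.2 = j2 := Or.inl (Fin.ext (by omega))
      have he := hu2 q hqT hqe
      have e1 : q.1.val = r2.1.val := by rw [he]
      have e2 : q.2.val = r2.2.val := by rw [he]
      exact hqne ⟨by omega, by omega⟩
    obtain ⟨p, hpT, hc⟩ := hT.2.2 q hqd hqT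
    obtain ⟨hpd1, hpd2⟩ := hT.1 p hpT
    have hne := hdeg p hpT
    have hne1 : p.1.val ≠ i.val := fun h => hne (Or.inl (Fin.ext h))
    have hne2 : p.2.val ≠ i.val := fun h => hne (Or.inr (Fin.ext h))
    have hb1 : p.1.val < m := p.1.isLt
    have hb2 : p.2.val < m := p.2.isLt
    simp only [Crosses, Xor', xor_def, Fin.lt_def, hq1, hq2] at hc
    have key : p.1 = j1 ∨ p.2 = j1 := by
      have hv : p.1.val = j1.val ∨ p.2.val = j1.val := by omega
      rcases hv with h | h
      · exact Or.inl (Fin.ext h)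
      · exact Or.inr (Fin.ext h)
    have hp := hu1 p hpT key
    have e1 : p.1.val = r1.1.val := by rw [hp]
    have e2 : p.2.val = r1.2.val := by rw [hp]
    omega
  · by_cases hxa : i.val = m - 2
    · have c1 := mod_char m i.val 1 (by omega) hxi (by omega)
      have hj1v : j1.val = m - 1 := by omega
      clear c1
      have c2 := mod_char m i.val 2 (by omega) hxi (by omega)
      have hj2v : j2.val = 0 := by omega
      have cP := mod_char m i.val (m - 1) (by omega) hxi (by omega)
      have hr1a : r1.1.val = m - 3 ∧ r1.2.val = m - 1 := by
        rcases hr1 with ⟨f1, f2⟩ | ⟨f1, f2⟩ <;>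
          exact ⟨by omega, by omega⟩
      clear cP
      have c4 := mod_char m i.val 4 (by omega) hxi (by omega)
      have hqne : ¬(r2.1.val = 0 ∧ r2.2.val = m - 3) := by
        rcases hr2' with ⟨f1, f2⟩ | ⟨f1, f2⟩ <;> omega
      clear c2 c4 hr1 hr2' hr1e hr2e hkv h1v h2v hd1 hd2 hkE hi hA hB
      set q : Fin m × Fin m := (⟨0, by omega⟩, ⟨m - 3, by omega⟩) with hqdef
      have hq1 : q.1.val = 0 := rfl
      have hq2 : q.2.val = m - 3 := rfl
      have hqd : IsDiagonal m q := ⟨by omega, by omega⟩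
      have hqT : q ∉ T := by
        intro hqT
        have hqe : q.1 = j2 ∨ q.2 = j2 := Or.inl (Fin.ext (by omega))
        have he := hu2 q hqT hqe
        have e1 : q.1.val = r2.1.val := by rw [he]
        have e2 : q.2.val = r2.2.val := by rw [he]
        exact hqne ⟨by omega, by omega⟩
      obtain ⟨p, hpT, hc⟩ := hT.2.2 q hqd hqT
      obtain ⟨hpd1, hpd2⟩ := hT.1 p hpT
      have hne := hdeg p hpT
      have hne1 : p.1.val ≠ i.val := fun h => hne (Or.inl (Fin.ext h))
      have hne2 : p.2.val ≠ i.val := fun h => hne (Or.inr (Fin.ext h))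
      have hb1 : p.1.val < m := p.1.isLt
      have hb2 : p.2.val < m := p.2.isLt
      simp only [Crosses, Xor', xor_def, Fin.lt_def, hq1, hq2] at hc
      have key : p.1 = j1 ∨ p.2 = j1 := by
        have hv : p.1.val = j1.val ∨ p.2.val = j1.val := by omega
        rcases hv with h | h
        · exact Or.inl (Fin.ext h)
        · exact Or.inr (Fin.ext h)
      have hp := hu1 p hpT key
      have e1 : p.1.val = r1.1.val := by rw [hp]
      have e2 : p.2.val = r1.2.val := by rw [hp]
      omega
    · by_cases hxb : i.val = m - 1
      · have c1 := mod_char m i.val 1 (by omega) hxi (by omega)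
        have hj1v : j1.val = 0 := by omega
        clear c1
        have c2 := mod_char m i.val 2 (by omega) hxi (by omega)
        have hj2v : j2.val = 1 := by omega
        have cP := mod_char m i.val (m - 1) (by omega) hxi (by omega)
        have hr1a : r1.1.val = 0 ∧ r1.2.val = m - 2 := by
          rcases hr1 with ⟨f1, f2⟩ | ⟨f1, f2⟩ <;>
            exact ⟨by omega, by omega⟩
        clear cP
        have c4 := mod_char m i.val 4 (by omega) hxi (by omega)
        have hqne : ¬(r2.1.val = 1 ∧ r2.2.val = m - 2) := by
          rcases hr2' with ⟨f1, f2⟩ | ⟨f1, f2⟩ <;> omega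
        clear c2 c4 hr1 hr2' hr1e hr2e hkv h1v h2v hd1 hd2 hkE hi hA hB
        set q : Fin m × Fin m := (⟨1, by omega⟩, ⟨m - 2, by omega⟩) with hqdef
        have hq1 : q.1.val = 1 := rfl
        have hq2 : q.2.val = m - 2 := rfl
        have hqd : IsDiagonal m q := ⟨by omega, by omega⟩
        have hqT : q ∉ T := by
          intro hqT
          have hqe : q.1 = j2 ∨ q.2 = j2 := Or.inl (Fin.ext (by omega))
          have he := hu2 q hqT hqe
          have e1 : q.1.val = r2.1.val := by rw [he]
          have e2 : q.2.val = r2.2.val := by rw [he]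
          exact hqne ⟨by omega, by omega⟩
        obtain ⟨p, hpT, hc⟩ := hT.2.2 q hqd hqT
        obtain ⟨hpd1, hpd2⟩ := hT.1 p hpT
        have hne := hdeg p hpT
        have hne1 : p.1.val ≠ i.val := fun h => hne (Or.inl (Fin.ext h))
        have hne2 : p.2.val ≠ i.val := fun h => hne (Or.inr (Fin.ext h))
        have hb1 : p.1.val < m := p.1.isLt
        have hb2 : p.2.val < m := p.2.isLt
        simp only [Crosses, Xor', xor_def, Fin.lt_def, hq1, hq2] at hc
        have key : p.1 = j1 ∨ p.2 = j1 := by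
          have hv : p.1.val = j1.val ∨ p.2.val = j1.val := by omega
          rcases hv with h | h
          · exact Or.inl (Fin.ext h)
          · exact Or.inr (Fin.ext h)
        have hp := hu1 p hpT key
        have e1 : p.1.val = r1.1.val := by rw [hp]
        have e2 : p.2.val = r1.2.val := by rw [hp]
        omega
      · have c1 := mod_char m i.val 1 (by omega) hxi (by omega)
        have hj1v : j1.val = i.val + 1 := by omega
        clear c1
        have c2 := mod_char m i.val 2 (by omega) hxi (by omega)
        have hj2v : j2.val = i.val + 2 := by omega
        have cP := mod_char m i.val (m - 1) (by omega) hxi (by omega)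
        have hr1a : r1.1.val = i.val - 1 ∧ r1.2.val = i.val + 1 := by
          rcases hr1 with ⟨f1, f2⟩ | ⟨f1, f2⟩ <;>
            exact ⟨by omega, by omega⟩
        clear cP
        have c4 := mod_char m i.val 4 (by omega) hxi (by omega)
        have hqne : ¬(r2.1.val = i.val - 1 ∧ r2.2.val = i.val + 2) := by
          rcases hr2' with ⟨f1, f2⟩ | ⟨f1, f2⟩ <;> omega
        clear c2 c4 hr1 hr2' hr1e hr2e hkv h1v h2v hd1 hd2 hkE hi hA hB
        set q : Fin m × Fin m := (⟨i.val - 1, by omega⟩, ⟨i.val + 2, by omega⟩) with hqdef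
        have hq1 : q.1.val = i.val - 1 := rfl
        have hq2 : q.2.val = i.val + 2 := rfl
        have hqd : IsDiagonal m q := ⟨by omega, by omega⟩
        have hqT : q ∉ T := by
          intro hqT
          have hqe : q.1 = j2 ∨ q.2 = j2 := Or.inr (Fin.ext (by omega))
          have he := hu2 q hqT hqe
          have e1 : q.1.val = r2.1.val := by rw [he]
          have e2 : q.2.val = r2.2.val := by rw [he]
          exact hqne ⟨by omega, by omega⟩
        obtain ⟨p, hpT, hc⟩ := hT.2.2 q hqd hqT
        obtain ⟨hpd1, hpd2⟩ := hT.1 p hpT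
        have hne := hdeg p hpT
        have hne1 : p.1.val ≠ i.val := fun h => hne (Or.inl (Fin.ext h))
        have hne2 : p.2.val ≠ i.val := fun h => hne (Or.inr (Fin.ext h))
        have hb1 : p.1.val < m := p.1.isLt
        have hb2 : p.2.val < m := p.2.isLt
        simp only [Crosses, Xor', xor_def, Fin.lt_def, hq1, hq2] at hc
        have key : p.1 = j1 ∨ p.2 = j1 := by
          have hv : p.1.val = j1.val ∨ p.2.val = j1.val := by omega
          rcases hv with h | h
          · exact Or.inl (Fin.ext h)
          · exact Or.inr (Fin.ext h)
        have hp := hu1 p hpT key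
        have e1 : p.1.val = r1.1.val := by rw [hp]
        have e2 : p.2.val = r1.2.val := by rw [hp]
        omega

end EarsAux

open EarsAux in
set_option maxHeartbeats 1000000 in
theorem ears_and_degree_one_bound {m : ℕ} (hm : 6 ≤ m)
    (T : Finset (Fin m × Fin m)) (hT : IsTriangulation m T) :
    6 * (Finset.univ.filter (fun i : Fin m => degT T i = 0)).card +
      2 * (Finset.univ.filter (fun i : Fin m => degT T i = 1)).card ≤ 3 * m := by
  classical
  have hm0 : 0 < m := by omega
  set A : Finset (Fin m) := Finset.univ.filter (fun i : Fin m => degT T i = 0) with hA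
  set B : Finset (Fin m) := Finset.univ.filter (fun i : Fin m => degT T i = 1) with hB
  set Ac : Finset (Fin m) := Finset.univ.filter (fun i : Fin m => ¬ degT T i = 0) with hAc
  set f : Fin m → ℕ := fun i => if degT T i = 1 then 1 else 3 with hf
  set vtx : Fin m → ℕ → Fin m := fun e j => ⟨(e.val + j) % m, Nat.mod_lt _ hm0⟩ with hvtx
  set F : Fin m → Finset (Fin m) := fun e =>
    if degT T (vtx e 2) = 0 then {vtx e 1}
    else if degT T (vtx e 3) = 0 then {vtx e 1, vtx e 2}
    else {vtx e 1, vtx e 2, vtx e 3} with hF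
  have hAe : ∀ e ∈ A, degT T e = 0 := by
    intro e he
    exact (Finset.mem_filter.mp he).2
  have hmem : ∀ e v, v ∈ F e → v = vtx e 1 ∨ (v = vtx e 2 ∧ degT T (vtx e 2) ≠ 0) ∨
      (v = vtx e 3 ∧ degT T (vtx e 2) ≠ 0 ∧ degT T (vtx e 3) ≠ 0) := by
    intro e v hv
    by_cases h2 : degT T (vtx e 2) = 0
    · simp only [hF, if_pos h2, Finset.mem_singleton] at hv
      exact Or.inl hv
    · by_cases h3 : degT T (vtx e 3) = 0
      · simp only [hF, if_neg h2, if_pos h3, Finset.mem_insert, Finset.mem_singleton] at hv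
        rcases hv with hv | hv
        · exact Or.inl hv
        · exact Or.inr (Or.inl ⟨hv, h2⟩)
      · simp only [hF, if_neg h2, if_neg h3, Finset.mem_insert, Finset.mem_singleton] at hv
        rcases hv with hv | hv | hv
        · exact Or.inl hv
        · exact Or.inr (Or.inl ⟨hv, h2⟩)
        · exact Or.inr (Or.inr ⟨hv, h2, h3⟩)
  have hFsub : ∀ e ∈ A, ∀ v ∈ F e, v ∈ Ac := by
    intro e he v hv
    have h0 := hAe e he
    have hv' := hmem e v hv
    rw [hAc]
    refine Finset.mem_filter.mpr ⟨Finset.mem_univ _, ?_⟩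
    rcases hv' with rfl | ⟨rfl, h⟩ | ⟨rfl, _, h⟩
    · intro hcon
      exact no_adjacent_ears hm hT rfl h0 hcon
    · exact h
    · exact h
  have hdisj : (A : Set (Fin m)).PairwiseDisjoint F := by
    intro e he e' he' hne
    simp only [Function.onFun]
    rw [Finset.disjoint_left]
    intro v hv hv'
    have he0 : degT T e = 0 := hAe e (by exact_mod_cast he)
    have he'0 : degT T e' = 0 := hAe e' (by exact_mod_cast he')
    have hme := hmem e v hv
    have hme' := hmem e' v hv'
    have hb : e.val < m := e.isLt
    have hb' : e'.val < m := e'.isLt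
    rcases hme with h1 | ⟨h1, hc2⟩ | ⟨h1, hc2, hc3⟩ <;>
      rcases hme' with h2 | ⟨h2, hc2'⟩ | ⟨h2, hc2', hc3'⟩
    · -- (1,1)
      have w := congrArg Fin.val (h1.symm.trans h2)
      simp only [hvtx] at w
      have ca := mod_char m e.val 1 hm0 hb (by omega)
      have cb := mod_char m e'.val 1 hm0 hb' (by omega)
      exact hne (Fin.ext (by omega))
    · -- (1,2)
      have w := congrArg Fin.val (h1.symm.trans h2)
      simp only [hvtx] at w
      have ca := mod_char m e.val 1 hm0 hb (by omega)
      have cb := mod_char m e'.val 2 hm0 hb' (by omega)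
      have cc := mod_char m e'.val 1 hm0 hb' (by omega)
      exact no_adjacent_ears hm hT (show e.val = (e'.val + 1) % m by omega) he'0 he0
    · -- (1,3)
      have w := congrArg Fin.val (h1.symm.trans h2)
      simp only [hvtx] at w
      have ca := mod_char m e.val 1 hm0 hb (by omega)
      have cb := mod_char m e'.val 3 hm0 hb' (by omega)
      have cc := mod_char m e'.val 2 hm0 hb' (by omega)
      have : vtx e' 2 = e := Fin.ext (by simp only [hvtx]; omega)
      rw [this] at hc2'
      exact hc2' he0
    · -- (2,1)
      have w := congrArg Fin.val (h1.symm.trans h2)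
      simp only [hvtx] at w
      have ca := mod_char m e.val 2 hm0 hb (by omega)
      have cb := mod_char m e'.val 1 hm0 hb' (by omega)
      have cc := mod_char m e.val 1 hm0 hb (by omega)
      exact no_adjacent_ears hm hT (show e'.val = (e.val + 1) % m by omega) he0 he'0
    · -- (2,2)
      have w := congrArg Fin.val (h1.symm.trans h2)
      simp only [hvtx] at w
      have ca := mod_char m e.val 2 hm0 hb (by omega)
      have cb := mod_char m e'.val 2 hm0 hb' (by omega)
      exact hne (Fin.ext (by omega))
    · -- (2,3)
      have w := congrArg Fin.val (h1.symm.trans h2)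
      simp only [hvtx] at w
      have ca := mod_char m e.val 2 hm0 hb (by omega)
      have cb := mod_char m e'.val 3 hm0 hb' (by omega)
      have cc := mod_char m e'.val 1 hm0 hb' (by omega)
      exact no_adjacent_ears hm hT (show e.val = (e'.val + 1) % m by omega) he'0 he0
    · -- (3,1)
      have w := congrArg Fin.val (h1.symm.trans h2)
      simp only [hvtx] at w
      have ca := mod_char m e.val 3 hm0 hb (by omega)
      have cb := mod_char m e'.val 1 hm0 hb' (by omega)
      have cc := mod_char m e.val 2 hm0 hb (by omega)
      have : vtx e 2 = e' := Fin.ext (by simp only [hvtx]; omega)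
      rw [this] at hc2
      exact hc2 he'0
    · -- (3,2)
      have w := congrArg Fin.val (h1.symm.trans h2)
      simp only [hvtx] at w
      have ca := mod_char m e.val 3 hm0 hb (by omega)
      have cb := mod_char m e'.val 2 hm0 hb' (by omega)
      have cc := mod_char m e.val 1 hm0 hb (by omega)
      exact no_adjacent_ears hm hT (show e'.val = (e.val + 1) % m by omega) he0 he'0
    · -- (3,3)
      have w := congrArg Fin.val (h1.symm.trans h2)
      simp only [hvtx] at w
      have ca := mod_char m e.val 3 hm0 hb (by omega)
      have cb := mod_char m e'.val 3 hm0 hb' (by omega)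
      exact hne (Fin.ext (by omega))
  have hfge : ∀ v : Fin m, 1 ≤ f v := by
    intro v
    simp only [hf]
    split <;> omega
  have hlow : ∀ e ∈ A, 3 ≤ ∑ v ∈ F e, f v := by
    intro e he
    have he0 := hAe e he
    have hb : e.val < m := e.isLt
    have c1 := mod_char m e.val 1 hm0 hb (by omega)
    have c2 := mod_char m e.val 2 hm0 hb (by omega)
    have c3 := mod_char m e.val 3 hm0 hb (by omega)
    by_cases h2 : degT T (vtx e 2) = 0
    · have hFe : F e = {vtx e 1} := by simp only [hF, if_pos h2]
      rw [hFe, Finset.sum_singleton]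
      have hdeg2 : 2 ≤ degT T (vtx e 1) := ear_gap1 hm hT rfl rfl he0 h2
      simp only [hf]
      rw [if_neg (by omega)]
    · by_cases h3 : degT T (vtx e 3) = 0
      · have hFe : F e = {vtx e 1, vtx e 2} := by simp only [hF, if_neg h2, if_pos h3]
        have hne12 : vtx e 1 ≠ vtx e 2 := by
          intro h
          have := congrArg Fin.val h
          simp only [hvtx] at this
          omega
        rw [hFe, Finset.sum_insert (Finset.notMem_singleton.mpr hne12),
          Finset.sum_singleton]
        have hnot : ¬(degT T (vtx e 1) = 1 ∧ degT T (vtx e 2) = 1) := by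
          rintro ⟨ha, hb'⟩
          exact ear_gap2 hm hT rfl rfl rfl he0 h3 ha hb'
        simp only [hf]
        by_cases ha : degT T (vtx e 1) = 1 <;> by_cases hb' : degT T (vtx e 2) = 1
        · exact absurd ⟨ha, hb'⟩ hnot
        · rw [if_pos ha, if_neg hb']; omega
        · rw [if_neg ha, if_pos hb']; omega
        · rw [if_neg ha, if_neg hb']; omega
      · have hFe : F e = {vtx e 1, vtx e 2, vtx e 3} := by
          simp only [hF, if_neg h2, if_neg h3]
        have hne12 : vtx e 1 ≠ vtx e 2 := by
          intro h; have := congrArg Fin.val h; simp only [hvtx] at this; omega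
        have hne13 : vtx e 1 ≠ vtx e 3 := by
          intro h; have := congrArg Fin.val h; simp only [hvtx] at this; omega
        have hne23 : vtx e 2 ≠ vtx e 3 := by
          intro h; have := congrArg Fin.val h; simp only [hvtx] at this; omega
        rw [hFe, Finset.sum_insert (by
            simp only [Finset.mem_insert, Finset.mem_singleton]
            push_neg
            exact ⟨hne12, hne13⟩),
          Finset.sum_insert (Finset.notMem_singleton.mpr hne23), Finset.sum_singleton]
        have g1 := hfge (vtx e 1)
        have g2 := hfge (vtx e 2)
        have g3 := hfge (vtx e 3)
        omega
  have hbi : ∑ v ∈ A.biUnion F, f v = ∑ e ∈ A, ∑ v ∈ F e, f v := Finset.sum_biUnion hdisj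
  have h3a : 3 * A.card ≤ ∑ v ∈ A.biUnion F, f v := by
    rw [hbi]
    calc 3 * A.card = ∑ _e ∈ A, 3 := by rw [Finset.sum_const, smul_eq_mul, mul_comm]
      _ ≤ _ := Finset.sum_le_sum hlow
  have hsub : A.biUnion F ⊆ Ac := by
    intro v hv
    rw [Finset.mem_biUnion] at hv
    obtain ⟨e, he, hve⟩ := hv
    exact hFsub e he v hve
  have hle : ∑ v ∈ A.biUnion F, f v ≤ ∑ v ∈ Ac, f v := Finset.sum_le_sum_of_subset hsub
  have hfb : Ac.filter (fun v => degT T v = 1) = B := by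
    ext v
    simp only [hAc, hB, Finset.mem_filter, Finset.mem_univ, true_and]
    constructor
    · rintro ⟨_, h⟩; exact h
    · intro h; exact ⟨by omega, h⟩
  have hsum3 : ∑ v ∈ Ac, f v + 2 * B.card = 3 * Ac.card := by
    have h1 : ∑ v ∈ Ac, (f v + 2 * (if degT T v = 1 then 1 else 0)) = ∑ _v ∈ Ac, 3 := by
      refine Finset.sum_congr rfl ?_
      intro v hv
      have : ¬ degT T v = 0 := (Finset.mem_filter.mp hv).2
      simp only [hf]
      by_cases h : degT T v = 1
      · rw [if_pos h, if_pos h]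
      · rw [if_neg h, if_neg h]
    rw [Finset.sum_add_distrib, ← Finset.mul_sum, Finset.sum_boole] at h1
    rw [Finset.sum_const, smul_eq_mul] at h1
    rw [hfb] at h1
    simp only [Nat.cast_id] at h1
    omega
  have hcards : A.card + Ac.card = m := by
    have h := Finset.card_filter_add_card_filter_not
      (s := (Finset.univ : Finset (Fin m))) (p := fun i : Fin m => degT T i = 0)
    rw [Finset.card_univ, Fintype.card_fin] at h
    exact h
  omega
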